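/- Let N = N_1 ∪ ... ∪ N_k be a C*-decomposition of a chemical reaction network containing the zero complex, let k(0) ≥ 1 be the number of subnetworks N_i whose complex set contains the zero complex, let l and l_i denote the numbers of linkage classes of N and of N_i respectively. Then l = 1 + Σ_{i=1}^k l_i − k(0). -/

import Mathlib

open scoped Classical

noncomputable section

/-- A reaction: an ordered pair (reactant complex, product complex) of vectors in ℝ^S. -/
abbrev Rxn (S : Type*) := (S → ℝ) × (S → ℝ)

variable {S : Type*} [Fintype S]

/-- The set of complexes occurring in a reaction set. -/
def complexesOf (R : Finset (Rxn S)) : Finset (S → ℝ) :=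
  R.image Prod.fst ∪ R.image Prod.snd

/-- `(C, R)` is a chemical reaction network on the species set `S`:
complexes have nonnegative integer coordinates, reactions go between complexes,
no reaction is a loop, and every complex occurs in at least one reaction. -/
def IsCRN (C : Finset (S → ℝ)) (R : Finset (Rxn S)) : Prop :=
  C.Nonempty ∧ R.Nonempty ∧
  (∀ y ∈ C, ∀ s, ∃ n : ℕ, y s = (n : ℝ)) ∧
  (∀ r ∈ R, r.1 ∈ C ∧ r.2 ∈ C) ∧
  (∀ r ∈ R, r.1 ≠ r.2) ∧
  (∀ y ∈ C, ∃ r ∈ R, r.1 = y ∨ r.2 = y)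

/-- The stoichiometric subspace `span {y' - y : (y, y') ∈ R}`. -/
def stoichSubspace (R : Finset (Rxn S)) : Submodule ℝ (S → ℝ) :=
  Submodule.span ℝ ((fun r : Rxn S => r.2 - r.1) '' ↑R)

/-- The rank `s = dim S` of the network. -/
def crnRank (R : Finset (Rxn S)) : ℕ := Module.finrank ℝ (stoichSubspace R)

/-- The standard basis vector `ω_y` of the complex space `ℝ^C` (realized inside
the space of real-valued functions on complexes). -/
def omegaC (y : S → ℝ) : (S → ℝ) → ℝ := fun z => if z = y then 1 else 0

/-- The image of the incidence map `I_a`, i.e. the span of the vectors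
`ω_{y'} - ω_y` over reactions `y → y'`. -/
def incImage (R : Finset (Rxn S)) : Submodule ℝ ((S → ℝ) → ℝ) :=
  Submodule.span ℝ ((fun r : Rxn S => omegaC r.2 - omegaC r.1) '' ↑R)

/-- The underlying undirected graph of `(C, R)`, on the complexes occurring in `R`. -/
def linkGraph (R : Finset (Rxn S)) : SimpleGraph {y : S → ℝ // y ∈ complexesOf R} where
  Adj a b := a ≠ b ∧ ((a.1, b.1) ∈ R ∨ (b.1, a.1) ∈ R)
  symm := ⟨fun a b h => ⟨h.1.symm, h.2.symm⟩⟩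
  loopless := ⟨fun a h => h.1 rfl⟩

/-- `n`, the number of complexes. -/
def numComplexes (R : Finset (Rxn S)) : ℕ := (complexesOf R).card

/-- `l`, the number of linkage classes (connected components of the
underlying undirected graph). -/
def numLinkageClasses (R : Finset (Rxn S)) : ℕ :=
  Nat.card (linkGraph R).ConnectedComponent

/-- The deficiency `δ = n - l - s` (as an integer). -/
def deficiency (R : Finset (Rxn S)) : ℤ :=
  (numComplexes R : ℤ) - (numLinkageClasses R : ℤ) - (crnRank R : ℤ)

/-- A covering of the reaction set `R`: a family of subsets of `R` whose union is `R`. -/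
def IsCovering {ι : Type*} (R : Finset (Rxn S)) (f : ι → Finset (Rxn S)) : Prop :=
  (∀ i, f i ⊆ R) ∧ ∀ r ∈ R, ∃ i, r ∈ f i

/-- A decomposition of the reaction set `R`: a partition of `R` into nonempty subsets. -/
def IsDecomposition {ι : Type*} (R : Finset (Rxn S)) (f : ι → Finset (Rxn S)) : Prop :=
  (∀ i, (f i).Nonempty) ∧ (Pairwise fun i j => Disjoint (f i) (f j)) ∧
  (∀ i, f i ⊆ R) ∧ (∀ r ∈ R, ∃ i, r ∈ f i)

/-- Independence: the stoichiometric subspace is the direct sum of those of the subnetworks. -/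
def IsIndependent {ι : Type*} (R : Finset (Rxn S)) (f : ι → Finset (Rxn S)) : Prop :=
  (⨆ i, stoichSubspace (f i)) = stoichSubspace R ∧
  iSupIndep fun i => stoichSubspace (f i)

/-- Incidence independence: the image of the incidence map is the direct sum of the
images of the incidence maps of the subnetworks. -/
def IsIncidenceIndependent {ι : Type*} (R : Finset (Rxn S)) (f : ι → Finset (Rxn S)) : Prop :=
  (⨆ i, incImage (f i)) = incImage R ∧
  iSupIndep fun i => incImage (f i)

/-- A `𝒞`-decomposition: the complex sets of the subnetworks are pairwise disjoint. -/
def CDisjoint {ι : Type*} (f : ι → Finset (Rxn S)) : Prop :=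
  Pairwise fun i j => Disjoint (complexesOf (f i)) (complexesOf (f j))

/-- The set of nonzero complexes of a reaction set. -/
def nonzeroComplexesOf (R : Finset (Rxn S)) : Finset (S → ℝ) := (complexesOf R).erase 0

/-- A `𝒞*`-decomposition: the sets of nonzero complexes are pairwise disjoint. -/
def CstarDisjoint {ι : Type*} (f : ι → Finset (Rxn S)) : Prop :=
  Pairwise fun i j => Disjoint (nonzeroComplexesOf (f i)) (nonzeroComplexesOf (f j))

/-- A coarsening: each block of `f` is contained in exactly one block of `g`. -/
def IsCoarsening {ι κ : Type*} (f : ι → Finset (Rxn S)) (g : κ → Finset (Rxn S)) : Prop :=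
  ∀ i, ∃! j, f i ⊆ g j

/-- Undirected reachability in the graph `(C, R)`. -/
def undirReach (R : Finset (Rxn S)) : (S → ℝ) → (S → ℝ) → Prop :=
  Relation.ReflTransGen fun y z => (y, z) ∈ R ∨ (z, y) ∈ R

/-- Directed reachability in the digraph `(C, R)`. -/
def dirReach (R : Finset (Rxn S)) : (S → ℝ) → (S → ℝ) → Prop :=
  Relation.ReflTransGen fun y z => (y, z) ∈ R

/-- Weak reversibility: every connected component of the directed graph `(C, R)`
is strongly connected. -/
def WeaklyReversible (R : Finset (Rxn S)) : Prop :=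
  ∀ y z, undirReach R y z → dirReach R y z

/-- The set of complex balanced equilibria `Z₊(N, K)` of a kinetics `K` on the
(sub)network with reaction set `R`: positive vectors `x` with `I_a K(x) = 0`. -/
def Zplus (R : Finset (Rxn S)) (K : (S → ℝ) → Rxn S → ℝ) : Set (S → ℝ) :=
  {x | (∀ s, 0 < x s) ∧ ∑ r ∈ R, K x r • (omegaC r.2 - omegaC r.1) = 0}

/-- The reactions lying in the linkage class of the zero complex. -/
def zeroLinkReactions (R : Finset (Rxn S)) : Finset (Rxn S) :=
  R.filter fun r => undirReach R 0 r.1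

/-- The reaction set of the linkage class `c`: all reactions whose complexes lie in `c`. -/
def lcReactions (R : Finset (Rxn S)) (c : (linkGraph R).ConnectedComponent) :
    Finset (Rxn S) :=
  R.filter fun r => ∃ h : r.1 ∈ complexesOf R, (linkGraph R).connectedComponentMk ⟨r.1, h⟩ = c

/-- The network has independent linkage classes (ILC): the linkage class
decomposition is independent. -/
def HasILC (R : Finset (Rxn S)) : Prop := IsIndependent R (lcReactions R)


section Aux17

private lemma mem_cpx_left {R : Finset (Rxn S)} {r : Rxn S} (hr : r ∈ R) :
    r.1 ∈ complexesOf R :=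
  Finset.mem_union_left _ (Finset.mem_image_of_mem _ hr)

private lemma mem_cpx_right {R : Finset (Rxn S)} {r : Rxn S} (hr : r ∈ R) :
    r.2 ∈ complexesOf R :=
  Finset.mem_union_right _ (Finset.mem_image_of_mem _ hr)

private lemma complexesOf_mono {R R' : Finset (Rxn S)} (h : R ⊆ R') :
    complexesOf R ⊆ complexesOf R' :=
  Finset.union_subset_union (Finset.image_subset_image h) (Finset.image_subset_image h)

/-- the undirected edge relation -/
private def urel (R : Finset (Rxn S)) (y z : S → ℝ) : Prop := (y, z) ∈ R ∨ (z, y) ∈ R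

private lemma urel_mem_left {R : Finset (Rxn S)} {y z : S → ℝ} (h : urel R y z) :
    y ∈ complexesOf R := by
  rcases h with h | h
  · exact mem_cpx_left h
  · exact mem_cpx_right h

private lemma urel_mem_right {R : Finset (Rxn S)} {y z : S → ℝ} (h : urel R y z) :
    z ∈ complexesOf R := by
  rcases h with h | h
  · exact mem_cpx_right h
  · exact mem_cpx_left h

private lemma urel_ne {R : Finset (Rxn S)} (hne : ∀ r ∈ R, r.1 ≠ r.2) {y z : S → ℝ}
    (h : urel R y z) : y ≠ z := by
  rcases h with h | h
  · exact hne _ h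
  · exact (hne _ h).symm

private lemma rtg_of_walk {R : Finset (Rxn S)} :
    ∀ {a b : {y : S → ℝ // y ∈ complexesOf R}}, (linkGraph R).Walk a b →
      Relation.ReflTransGen (urel R) a.1 b.1 := by
  intro a b w
  induction w with
  | nil => exact .refl
  | cons h _ ih => exact .head h.2 ih

private lemma reach_of_rtg {R : Finset (Rxn S)} (hne : ∀ r ∈ R, r.1 ≠ r.2) {y z : S → ℝ}
    (h : Relation.ReflTransGen (urel R) y z) :
    ∀ (hy : y ∈ complexesOf R) (hz : z ∈ complexesOf R),
      (linkGraph R).Reachable ⟨y, hy⟩ ⟨z, hz⟩ := by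
  induction h with
  | refl => intro hy hz; exact SimpleGraph.Reachable.refl _
  | tail _ step ih =>
    intro hy hz
    have hb := urel_mem_left step
    exact (ih hy hb).trans
      (SimpleGraph.Adj.reachable
        ⟨fun e => urel_ne hne step (congrArg Subtype.val e), step⟩)

private lemma reach_iff {R : Finset (Rxn S)} (hne : ∀ r ∈ R, r.1 ≠ r.2)
    {y z : S → ℝ} (hy : y ∈ complexesOf R) (hz : z ∈ complexesOf R) :
    (linkGraph R).Reachable ⟨y, hy⟩ ⟨z, hz⟩ ↔ Relation.ReflTransGen (urel R) y z := by
  constructor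
  · intro h
    obtain ⟨w⟩ := h
    exact rtg_of_walk w
  · intro h
    exact reach_of_rtg hne h hy hz

private lemma mem_of_rtg_ne {R : Finset (Rxn S)} {y z : S → ℝ}
    (h : Relation.ReflTransGen (urel R) y z) (hne : y ≠ z) : z ∈ complexesOf R := by
  induction h with
  | refl => exact absurd rfl hne
  | tail _ step _ => exact urel_mem_right step

private lemma same_idx {k : ℕ} {f : Fin k → Finset (Rxn S)} (hstar : CstarDisjoint f)
    {y : S → ℝ} (hy0 : y ≠ 0) {i j : Fin k}
    (hi : y ∈ complexesOf (f i)) (hj : y ∈ complexesOf (f j)) : i = j := by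
  by_contra hij
  have hd := hstar hij
  have hyi : y ∈ nonzeroComplexesOf (f i) := Finset.mem_erase.mpr ⟨hy0, hi⟩
  have hyj : y ∈ nonzeroComplexesOf (f j) := Finset.mem_erase.mpr ⟨hy0, hj⟩
  exact (Finset.disjoint_left.mp hd hyi) hyj

/-- Key lemma: a path in `R` starting at a nonzero complex of `f i` either stays
in `f i` or reaches `0` within `f i`. -/
private lemma lemL {k : ℕ} {R : Finset (Rxn S)} {f : Fin k → Finset (Rxn S)}
    (hdec : IsDecomposition R f) (hstar : CstarDisjoint f) {i : Fin k}
    {y z : S → ℝ} (h : Relation.ReflTransGen (urel R) y z)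
    (hy0 : y ≠ 0) (hyi : y ∈ complexesOf (f i)) :
    Relation.ReflTransGen (urel (f i)) y z ∨
      Relation.ReflTransGen (urel (f i)) y 0 := by
  revert hy0 hyi
  induction h using Relation.ReflTransGen.head_induction_on with
  | refl => intro _ _; exact Or.inl .refl
  | @head a c step hcz ih =>
    intro ha0 hai
    have hstep : urel (f i) a c := by
      rcases step with hs | hs
      · obtain ⟨m, hm⟩ := hdec.2.2.2 _ hs
        have him : i = m := same_idx hstar ha0 hai (mem_cpx_left hm)
        exact Or.inl (him ▸ hm)
      · obtain ⟨m, hm⟩ := hdec.2.2.2 _ hs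
        have him : i = m := same_idx hstar ha0 hai (mem_cpx_right hm)
        exact Or.inr (him ▸ hm)
    by_cases hc0 : c = 0
    · exact Or.inr (.single (hc0 ▸ hstep))
    · have hci : c ∈ complexesOf (f i) := urel_mem_right hstep
      rcases ih hc0 hci with h' | h'
      · exact Or.inl (.head hstep h')
      · exact Or.inr (.head hstep h')

end Aux17

/-- for a C*-decomposition of a network containing the zero complex,
with k(0) ≥ 1 the number of subnetworks containing the zero complex,
l = 1 + Σ l_i - k(0). -/
theorem stmt_17 (C : Finset (S → ℝ)) (R : Finset (Rxn S)) {k : ℕ}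
    (f : Fin k → Finset (Rxn S)) (hcrn : IsCRN C R) (h0 : (0 : S → ℝ) ∈ C)
    (hdec : IsDecomposition R f) (hstar : CstarDisjoint f)
    (k0 : ℕ)
    (hk0 : k0 = (Finset.univ.filter fun i => (0 : S → ℝ) ∈ complexesOf (f i)).card)
    (hk0pos : 1 ≤ k0) :
    (numLinkageClasses R : ℤ) =
      1 + (∑ i, (numLinkageClasses (f i) : ℤ)) - (k0 : ℤ) := by
  classical
  obtain ⟨hCne, hRne, hint, hcpx, hloop, hocc⟩ := hcrn
  have h0R : (0 : S → ℝ) ∈ complexesOf R := by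
    obtain ⟨r, hr, h⟩ := hocc 0 h0
    rcases h with h | h
    · exact h ▸ mem_cpx_left hr
    · exact h ▸ mem_cpx_right hr
  have hsub : ∀ i, f i ⊆ R := hdec.2.2.1
  have hnei : ∀ i, ∀ r ∈ f i, r.1 ≠ r.2 := fun i r hr => hloop r (hsub i hr)
  haveI : Fintype ((linkGraph R).ConnectedComponent) := by
    haveI : Finite ((linkGraph R).ConnectedComponent) := Quot.finite _
    exact Fintype.ofFinite _
  haveI instFi : ∀ i, Fintype ((linkGraph (f i)).ConnectedComponent) := fun i => by
    haveI : Finite ((linkGraph (f i)).ConnectedComponent) := Quot.finite _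
    exact Fintype.ofFinite _
  -- the inclusion graph homomorphisms and the induced map on components
  let incl : ∀ i : Fin k, linkGraph (f i) →g linkGraph R := fun i =>
    { toFun := fun v => ⟨v.1, complexesOf_mono (hsub i) v.2⟩
      map_rel' := fun {a b} h =>
        ⟨fun e => h.1 (Subtype.ext (Subtype.mk_eq_mk.mp e)),
          Or.imp (fun hh => hsub i hh) (fun hh => hsub i hh) h.2⟩ }
  let F : (Σ i : Fin k, (linkGraph (f i)).ConnectedComponent) →
      (linkGraph R).ConnectedComponent := fun p => p.2.map (incl p.1)
  have hF_mk : ∀ (i : Fin k) (v : {y : S → ℝ // y ∈ complexesOf (f i)}),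
      F ⟨i, (linkGraph (f i)).connectedComponentMk v⟩
        = (linkGraph R).connectedComponentMk ⟨v.1, complexesOf_mono (hsub i) v.2⟩ :=
    fun i v => rfl
  have hexists_i : ∀ y ∈ complexesOf R, ∃ i, y ∈ complexesOf (f i) := by
    intro y hy
    rcases Finset.mem_union.mp hy with hy | hy
    · obtain ⟨r, hr, rfl⟩ := Finset.mem_image.mp hy
      obtain ⟨i, hi⟩ := hdec.2.2.2 r hr
      exact ⟨i, mem_cpx_left hi⟩
    · obtain ⟨r, hr, rfl⟩ := Finset.mem_image.mp hy
      obtain ⟨i, hi⟩ := hdec.2.2.2 r hr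
      exact ⟨i, mem_cpx_right hi⟩
  set K0 : (linkGraph R).ConnectedComponent :=
    (linkGraph R).connectedComponentMk ⟨0, h0R⟩ with hK0def
  -- fibers over K0
  have fiber_zero : ∀ (i : Fin k) (c : (linkGraph (f i)).ConnectedComponent),
      F ⟨i, c⟩ = K0 →
      ∃ h0i : (0 : S → ℝ) ∈ complexesOf (f i),
        c = (linkGraph (f i)).connectedComponentMk ⟨0, h0i⟩ := by
    intro i c hc
    obtain ⟨v, rfl⟩ := c.exists_rep
    have hc2 : (linkGraph R).connectedComponentMk ⟨v.1, complexesOf_mono (hsub i) v.2⟩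
        = K0 := hc
    have hreach : Relation.ReflTransGen (urel R) v.1 0 :=
      (reach_iff hloop _ _).mp (SimpleGraph.ConnectedComponent.eq.mp hc2)
    by_cases hv0 : v.1 = 0
    · refine ⟨hv0 ▸ v.2, ?_⟩
      exact congrArg _ (Subtype.ext hv0)
    · have hto0 : Relation.ReflTransGen (urel (f i)) v.1 0 := by
        rcases lemL hdec hstar hreach hv0 v.2 with h | h
        exacts [h, h]
      have h0i : (0 : S → ℝ) ∈ complexesOf (f i) := mem_of_rtg_ne hto0 hv0
      exact ⟨h0i, SimpleGraph.ConnectedComponent.eq.mpr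
        ((reach_iff (hnei i) v.2 h0i).mpr hto0)⟩
  have card_fiber_zero :
      (Finset.univ.filter fun p : Σ i : Fin k, (linkGraph (f i)).ConnectedComponent =>
        F p = K0).card = k0 := by
    rw [hk0]
    apply Finset.card_bij (fun p _ => p.1)
    · intro p hp
      simp only [Finset.mem_filter, Finset.mem_univ, true_and] at hp ⊢
      exact (fiber_zero p.1 p.2 hp).1
    · rintro ⟨i, c⟩ hp ⟨j, c'⟩ hq hpq
      simp only [Finset.mem_filter, Finset.mem_univ, true_and] at hp hq
      obtain ⟨h0i, hc⟩ := fiber_zero i c hp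
      obtain ⟨h0j, hc'⟩ := fiber_zero j c' hq
      dsimp at hpq
      subst hpq
      rw [hc, hc']
    · intro i hi
      simp only [Finset.mem_filter, Finset.mem_univ, true_and] at hi
      refine ⟨⟨i, (linkGraph (f i)).connectedComponentMk ⟨0, hi⟩⟩, ?_, rfl⟩
      simp only [Finset.mem_filter, Finset.mem_univ, true_and]
      rfl
  -- fibers over other components
  have card_fiber_ne : ∀ K : (linkGraph R).ConnectedComponent, K ≠ K0 →
      (Finset.univ.filter fun p : Σ i : Fin k, (linkGraph (f i)).ConnectedComponent =>
        F p = K).card = 1 := by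
    intro K hK
    rw [Finset.card_eq_one]
    obtain ⟨v, rfl⟩ := K.exists_rep
    have hv0 : v.1 ≠ 0 := by
      intro h
      exact hK (congrArg _ (Subtype.ext h))
    obtain ⟨i, hi⟩ := hexists_i v.1 v.2
    refine ⟨⟨i, (linkGraph (f i)).connectedComponentMk ⟨v.1, hi⟩⟩, ?_⟩
    ext ⟨j, c⟩
    simp only [Finset.mem_filter, Finset.mem_univ, true_and, Finset.mem_singleton]
    constructor
    · intro hp
      obtain ⟨w, rfl⟩ := c.exists_rep
      have hp2 : (linkGraph R).connectedComponentMk ⟨w.1, complexesOf_mono (hsub j) w.2⟩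
          = (linkGraph R).connectedComponentMk v := hp
      have hwv : Relation.ReflTransGen (urel R) w.1 v.1 :=
        (reach_iff hloop _ v.2).mp (SimpleGraph.ConnectedComponent.eq.mp hp2)
      have hw0 : w.1 ≠ 0 := by
        intro h
        apply hK
        have hw' : (linkGraph R).connectedComponentMk ⟨w.1, complexesOf_mono (hsub j) w.2⟩
            = K0 := congrArg _ (Subtype.ext h)
        exact hp2.symm.trans hw'
      have hij : Relation.ReflTransGen (urel (f j)) w.1 v.1 := by
        rcases lemL hdec hstar hwv hw0 w.2 with h | h
        · exact h
        · exfalso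
          apply hK
          have hR0 : Relation.ReflTransGen (urel R) w.1 0 :=
            Relation.ReflTransGen.mono (fun a b hab => Or.imp (fun hh => hsub j hh) (fun hh => hsub j hh) hab) _ _ h
          have hw' : (linkGraph R).connectedComponentMk ⟨w.1, complexesOf_mono (hsub j) w.2⟩
              = K0 := SimpleGraph.ConnectedComponent.eq.mpr (reach_of_rtg hloop hR0 _ _)
          exact hp2.symm.trans hw'
      have hvj : v.1 ∈ complexesOf (f j) := by
        by_cases hwv1 : w.1 = v.1
        · exact hwv1 ▸ w.2
        · exact mem_of_rtg_ne hij hwv1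
      have hji : j = i := same_idx hstar hv0 hvj hi
      subst hji
      exact congrArg (Sigma.mk j) (SimpleGraph.ConnectedComponent.eq.mpr
        ((reach_iff (hnei j) w.2 hi).mpr hij))
    · intro he
      rw [he]
      rfl
  -- counting
  have hcard : Fintype.card (Σ i : Fin k, (linkGraph (f i)).ConnectedComponent)
      = ∑ K : (linkGraph R).ConnectedComponent,
          (Finset.univ.filter fun p : Σ i : Fin k, (linkGraph (f i)).ConnectedComponent =>
            F p = K).card := by
    rw [← Finset.card_univ]
    exact Finset.card_eq_sum_card_fiberwise (fun p _ => Finset.mem_univ (F p))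
  have hsum : ∑ K : (linkGraph R).ConnectedComponent,
      (Finset.univ.filter fun p : Σ i : Fin k, (linkGraph (f i)).ConnectedComponent =>
        F p = K).card
      = k0 + (Fintype.card ((linkGraph R).ConnectedComponent) - 1) := by
    rw [← Finset.add_sum_erase _ _ (Finset.mem_univ K0), card_fiber_zero]
    congr 1
    rw [Finset.sum_congr rfl (fun K hK => card_fiber_ne K (Finset.ne_of_mem_erase hK)),
      Finset.sum_const, smul_eq_mul, mul_one,
      Finset.card_erase_of_mem (Finset.mem_univ _), Finset.card_univ]
  have hpos : 1 ≤ Fintype.card ((linkGraph R).ConnectedComponent) :=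
    Fintype.card_pos_iff.mpr ⟨K0⟩
  have hsigma : Fintype.card (Σ i : Fin k, (linkGraph (f i)).ConnectedComponent)
      = ∑ i, Fintype.card ((linkGraph (f i)).ConnectedComponent) :=
    Fintype.card_sigma
  have hl : numLinkageClasses R = Fintype.card ((linkGraph R).ConnectedComponent) :=
    Nat.card_eq_fintype_card
  have hli : ∀ i, numLinkageClasses (f i)
      = Fintype.card ((linkGraph (f i)).ConnectedComponent) :=
    fun i => Nat.card_eq_fintype_card
  have hsum2 : ∑ i, numLinkageClasses (f i)
      = k0 + (Fintype.card ((linkGraph R).ConnectedComponent) - 1) := by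
    rw [Finset.sum_congr rfl (fun i _ => hli i), ← hsigma, hcard, hsum]
  have hcast : (∑ i, (numLinkageClasses (f i) : ℤ))
      = ((∑ i, numLinkageClasses (f i) : ℕ) : ℤ) := by
    push_cast
    rfl
  rw [hl, hcast, hsum2]
  have h1 : 1 ≤ Fintype.card ((linkGraph R).ConnectedComponent) := hpos
  omega

end
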